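/- The set of rapid ultrafilters on ℕ is a (two-sided) ideal-absorbing set on the right: it is closed under q ↦ q + p for rapid p, and hence if nonempty it contains a minimal left ideal of (βℕ, +) and thus a minimal idempotent. -/

import Mathlib

def Rapid (p : Ultrafilter ℕ) : Prop :=
  ∀ f : ℕ → ℕ, ∃ A ∈ p, ∀ i : ℕ, 0 < i → ((A : Set ℕ) ∩ Set.Iio (f i)).ncard < i

/-- `q + p`: `A ∈ q + p` iff `{m : {n : m + n ∈ A} ∈ p} ∈ q`. -/
def addUF (q p : Ultrafilter ℕ) : Ultrafilter ℕ :=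
  q.bind fun m => p.map fun n => m + n

def IsLeftIdeal (L : Set (Ultrafilter ℕ)) : Prop :=
  L.Nonempty ∧ ∀ q ∈ L, ∀ r : Ultrafilter ℕ, addUF r q ∈ L

def IsMinimalLeftIdeal (L : Set (Ultrafilter ℕ)) : Prop :=
  IsLeftIdeal L ∧ ∀ L' ⊆ L, IsLeftIdeal L' → L' = L

attribute [local instance] Ultrafilter.add Ultrafilter.addSemigroup

/-- A rapid ultrafilter contains all tails. -/
lemma rapid_tail {p : Ultrafilter ℕ} (hp : Rapid p) (n : ℕ) : {k | n < k} ∈ p := by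
  obtain ⟨A, hA, h⟩ := hp (fun _ => n + 1)
  have h1 : ((A : Set ℕ) ∩ Set.Iio (n + 1)).ncard < 1 := h 1 one_pos
  have hfin : ((A : Set ℕ) ∩ Set.Iio (n + 1)).Finite :=
    (Set.finite_Iio _).subset Set.inter_subset_right
  have hemp : (A : Set ℕ) ∩ Set.Iio (n + 1) = ∅ := by
    rw [← Set.ncard_eq_zero hfin]; omega
  refine Filter.mem_of_superset hA ?_
  intro k hk
  by_contra hkn
  have : k ∈ (A : Set ℕ) ∩ Set.Iio (n + 1) := ⟨hk, by simp at hkn ⊢; omega⟩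
  rw [hemp] at this; exact this

lemma exists_idx {p : Ultrafilter ℕ} (hp : Rapid p) {A : Set ℕ} (hA : A ∈ p) (m : ℕ) :
    ∃ n₀ ∈ A, m ≤ (A ∩ Set.Iic n₀).ncard := by
  induction m with
  | zero =>
    obtain ⟨n, hn⟩ := Ultrafilter.nonempty_of_mem hA
    exact ⟨n, hn, Nat.zero_le _⟩
  | succ m ih =>
    obtain ⟨n₀, hn₀, hm⟩ := ih
    obtain ⟨n₁, hn₁A, hn₁⟩ := Ultrafilter.nonempty_of_mem (p.inter_mem hA (rapid_tail hp n₀))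
    refine ⟨n₁, hn₁A, ?_⟩
    have hfin : (A ∩ Set.Iic n₀).Finite := (Set.finite_Iic _).subset Set.inter_subset_right
    have hsub : insert n₁ (A ∩ Set.Iic n₀) ⊆ A ∩ Set.Iic n₁ := by
      rintro x (rfl | ⟨hxA, hx⟩)
      · exact ⟨hn₁A, Set.mem_Iic.mpr le_rfl⟩
      · exact ⟨hxA, Set.mem_Iic.mpr (le_trans (Set.mem_Iic.mp hx) (le_of_lt hn₁))⟩
    have hnot : n₁ ∉ A ∩ Set.Iic n₀ := fun h => absurd (Set.mem_Iic.mp h.2) (not_le.mpr hn₁)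
    calc m + 1 ≤ (A ∩ Set.Iic n₀).ncard + 1 := by omega
      _ = (insert n₁ (A ∩ Set.Iic n₀)).ncard := (Set.ncard_insert_of_notMem hnot hfin).symm
      _ ≤ (A ∩ Set.Iic n₁).ncard :=
          Set.ncard_le_ncard hsub ((Set.finite_Iic _).subset Set.inter_subset_right)

lemma rapid_addUF {p : Ultrafilter ℕ} (q : Ultrafilter ℕ) (hp : Rapid p) :
    Rapid (addUF q p) := by
  intro f
  set F : ℕ → ℕ := fun i => i + (Finset.range (i + 1)).sum f with hF
  have hFmono : Monotone F := by
    intro a b hab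
    have : (Finset.range (a + 1)).sum f ≤ (Finset.range (b + 1)).sum f :=
      Finset.sum_le_sum_of_subset (Finset.range_subset_range.mpr (by omega))
    simp only [hF]; omega
  have hfF : ∀ i, f i ≤ F i := by
    intro i
    have : f i ≤ (Finset.range (i + 1)).sum f :=
      Finset.single_le_sum (fun _ _ => Nat.zero_le _) (Finset.self_mem_range_succ i)
    simp only [hF]; omega
  obtain ⟨A, hAp, hA⟩ := hp (fun j => F (4 * j * j))
  set A' : Set ℕ := {k | ∃ n ∈ A, ∃ m, m ≤ (A ∩ Set.Iic n).ncard ∧ k = m + n} with hA'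
  refine ⟨A', ?_, ?_⟩
  · -- A' ∈ addUF q p
    have : ∀ m : ℕ, {n | m + n ∈ A'} ∈ p := by
      intro m
      obtain ⟨n₀, hn₀A, hn₀⟩ := exists_idx hp hAp m
      refine Filter.mem_of_superset (p.inter_mem hAp (rapid_tail hp n₀)) ?_
      rintro n ⟨hnA, hn⟩
      refine ⟨n, hnA, m, le_trans hn₀ ?_, rfl⟩
      exact Set.ncard_le_ncard (Set.inter_subset_inter_right _ (Set.Iic_subset_Iic.mpr hn.le))
        ((Set.finite_Iic _).subset Set.inter_subset_right)
    have : {m | {n | m + n ∈ A'} ∈ p} = Set.univ := Set.eq_univ_of_forall this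
    show {m | {n | m + n ∈ A'} ∈ p} ∈ q
    rw [this]; exact Filter.univ_mem
  · -- smallness
    intro i hi
    set j := Nat.sqrt i with hj
    have hj1 : 1 ≤ j := by
      rw [hj]; exact Nat.sqrt_pos.mpr hi
    have hij : i ≤ 4 * j * j := by
      have h1 : i < (j + 1) * (j + 1) := Nat.lt_succ_sqrt i
      nlinarith
    have hAj : ((A : Set ℕ) ∩ Set.Iio (F (4 * j * j))).ncard < j := hA j hj1
    have hSfin : ((A : Set ℕ) ∩ Set.Iio (F (4 * j * j))).Finite :=
      (Set.finite_Iio _).subset Set.inter_subset_right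
    set Sfin : Finset ℕ := hSfin.toFinset with hSf
    set T : Finset ℕ := (Finset.range j ×ˢ Sfin).image (fun x => x.1 + x.2) with hT
    have hsub : A' ∩ Set.Iio (f i) ⊆ ↑T := by
      rintro k ⟨⟨n, hnA, m, hm, rfl⟩, hk⟩
      have hkfi : m + n < f i := hk
      have hfG : f i ≤ F (4 * j * j) := le_trans (hfF i) (hFmono hij)
      have hnS : n ∈ (A : Set ℕ) ∩ Set.Iio (F (4 * j * j)) := ⟨hnA, by simp; omega⟩
      have hmn : (A ∩ Set.Iic n).ncard ≤ ((A : Set ℕ) ∩ Set.Iio (F (4 * j * j))).ncard := by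
        refine Set.ncard_le_ncard ?_ hSfin
        refine Set.inter_subset_inter_right _ ?_
        intro x hx
        simp only [Set.mem_Iic] at hx
        simp only [Set.mem_Iio]
        have : n < F (4 * j * j) := hnS.2
        omega
      have hmj : m < j := lt_of_le_of_lt (le_trans hm hmn) hAj
      simp only [hT, Finset.coe_image, Set.mem_image, Finset.mem_coe, Finset.mem_product]
      exact ⟨(m, n), by simp [Finset.mem_range.mpr hmj, hSf, hSfin.mem_toFinset.mpr hnS], rfl⟩
    calc (A' ∩ Set.Iio (f i)).ncard ≤ (↑T : Set ℕ).ncard :=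
          Set.ncard_le_ncard hsub (T.finite_toSet)
      _ = T.card := Set.ncard_coe_finset T
      _ ≤ (Finset.range j ×ˢ Sfin).card := Finset.card_image_le
      _ = j * Sfin.card := by rw [Finset.card_product, Finset.card_range]
      _ = j * ((A : Set ℕ) ∩ Set.Iio (F (4 * j * j))).ncard := by
          rw [hSf, Set.ncard_eq_toFinset_card _ hSfin]
      _ < i := by
          have hjj : j * j ≤ i := Nat.sqrt_le i
          nlinarith

theorem stmt_13 :
    (∀ p q : Ultrafilter ℕ, Rapid p → Rapid (addUF q p)) ∧
    ((∃ p : Ultrafilter ℕ, Rapid p) →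
      ∃ L : Set (Ultrafilter ℕ), IsMinimalLeftIdeal L ∧ (∀ r ∈ L, Rapid r) ∧
        ∃ r ∈ L, addUF r r = r) := by
  have haddUF : ∀ q p : Ultrafilter ℕ, addUF q p = q + p := fun _ _ => rfl
  constructor
  · exact fun p q hp => rapid_addUF q hp
  · rintro ⟨p, hp⟩
    -- the closed left ideal βℕ + p, all of whose elements are rapid
    set L₀ : Set (Ultrafilter ℕ) := Set.range (· + p) with hL₀
    have hL₀closed : IsClosed L₀ :=
      (Ultrafilter.continuous_add_left p).isClosedMap.isClosed_range
    have hL₀rapid : ∀ r ∈ L₀, Rapid r := by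
      rintro r ⟨q, rfl⟩
      exact rapid_addUF q hp
    have hL₀ideal : ∀ q ∈ L₀, ∀ r : Ultrafilter ℕ, r + q ∈ L₀ := by
      rintro _ ⟨q, rfl⟩ r
      exact ⟨r + q, add_assoc r q p⟩
    have hL₀ne : L₀.Nonempty := ⟨p + p, p, rfl⟩
    -- Zorn's lemma on closed left ideals inside L₀
    set C : Set (Set (Ultrafilter ℕ)) :=
      {L | L ⊆ L₀ ∧ L.Nonempty ∧ IsClosed L ∧ ∀ q ∈ L, ∀ r : Ultrafilter ℕ, r + q ∈ L} with hC
    obtain ⟨L, hLmin⟩ : ∃ L, Minimal (· ∈ C) L := by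
      refine zorn_superset _ fun c hcs hc => ?_
      rcases c.eq_empty_or_nonempty with rfl | hcne
      · exact ⟨L₀, ⟨le_refl _, hL₀ne, hL₀closed, hL₀ideal⟩, by simp⟩
      refine ⟨⋂₀ c, ⟨?_, ?_, isClosed_sInter fun t ht => (hcs ht).2.2.1, ?_⟩,
        fun s hs => Set.sInter_subset_of_mem hs⟩
      · obtain ⟨t, ht⟩ := hcne
        exact (Set.sInter_subset_of_mem ht).trans (hcs ht).1
      · have := @IsCompact.nonempty_iInter_of_directed_nonempty_isCompact_isClosed _ _ _
          hcne.coe_sort ((↑) : c → Set (Ultrafilter ℕ))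
          (DirectedOn.directed_val (IsChain.directedOn hc.symm))
          (fun i => (hcs i.prop).2.1) (fun i => (hcs i.prop).2.2.1.isCompact)
          (fun i => (hcs i.prop).2.2.1)
        rwa [Set.sInter_eq_iInter]
      · intro q hq r
        rw [Set.mem_sInter] at hq ⊢
        exact fun t ht => (hcs ht).2.2.2 q (hq t ht) r
    obtain ⟨⟨hLL₀, hLne, hLclosed, hLideal⟩, hmin⟩ := hLmin
    refine ⟨L, ⟨⟨hLne, fun q hq r => hLideal q hq r⟩, ?_⟩, fun r hr => hL₀rapid r (hLL₀ hr), ?_⟩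
    · -- minimality among all left ideals
      rintro L' hL'L ⟨⟨q, hq⟩, hL'ideal⟩
      have hq' : q ∈ L' := hq
      set L'' : Set (Ultrafilter ℕ) := Set.range (· + q) with hL''
      have hL''sub : L'' ⊆ L' := by
        rintro _ ⟨r, rfl⟩
        exact hL'ideal q hq' r
      have hL''C : L'' ∈ C := by
        refine ⟨(hL''sub.trans hL'L).trans hLL₀, ⟨q + q, q, rfl⟩,
          (Ultrafilter.continuous_add_left q).isClosedMap.isClosed_range, ?_⟩
        rintro _ ⟨r, rfl⟩ r'
        exact ⟨r' + r, add_assoc r' r q⟩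
      have : L ⊆ L'' := hmin hL''C (hL''sub.trans hL'L)
      exact le_antisymm hL'L (this.trans hL''sub)
    · -- idempotent
      obtain ⟨r, hr, hrr⟩ := exists_idempotent_in_compact_add_subsemigroup
        Ultrafilter.continuous_add_left L hLne (hLclosed.isCompact)
        (fun x hx y hy => hLideal y hy x)
      exact ⟨r, hr, hrr⟩
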